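/- The function h(H) = log(Γ(3/2 - H)) - (1/2)·log(Γ(2 - 2H)) on (0,1) attains a strict global maximum at H = 1/2. -/

import Mathlib

open intervalIntegral MeasureTheory Set

lemma real_beta {s t : ℝ} (hs : 0 < s) (ht : 0 < t) :
    Real.Gamma s * Real.Gamma t
      = Real.Gamma (s + t) * ∫ r in (0:ℝ)..1, r ^ (s - 1) * (1 - r) ^ (t - 1) := by
  have h := Complex.Gamma_mul_Gamma_eq_betaIntegral (s := (s:ℂ)) (t := (t:ℂ))
    (by simpa using hs) (by simpa using ht)
  have hbeta : Complex.betaIntegral s t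
      = ((∫ r in (0:ℝ)..1, r ^ (s - 1) * (1 - r) ^ (t - 1) : ℝ) : ℂ) := by
    rw [Complex.betaIntegral, ← intervalIntegral.integral_ofReal]
    refine intervalIntegral.integral_congr fun r hr => ?_
    rw [Set.uIcc_of_le (by norm_num : (0:ℝ) ≤ 1)] at hr
    rw [Complex.ofReal_mul, Complex.ofReal_cpow hr.1,
      Complex.ofReal_cpow (by linarith [hr.2] : (0:ℝ) ≤ 1 - r)]
    push_cast
    ring
  rw [hbeta, Complex.Gamma_ofReal, Complex.Gamma_ofReal, ← Complex.ofReal_add,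
    Complex.Gamma_ofReal, ← Complex.ofReal_mul, ← Complex.ofReal_mul,
    Complex.ofReal_inj] at h
  exact h

lemma gamma_sq_lt {x : ℝ} (hx1 : -(1/2) < x) (hx2 : x < 1/2) (hx0 : x ≠ 0) :
    Real.Gamma (1 + x) ^ 2 < Real.Gamma (1 + 2 * x) := by
  have h1x : (0:ℝ) < 1 + x := by linarith
  have h12x : (0:ℝ) < 1 + 2 * x := by linarith
  have h2x1 : (-1:ℝ) < 2 * x := by linarith
  set f : ℝ → ℝ := fun r => r ^ x * (1 - r) ^ x with hf_def
  set g : ℝ → ℝ := fun r => (r ^ (2*x) + (1 - r) ^ (2*x)) / 2 with hg_def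
  -- integrability
  have hi1 : IntervalIntegrable (fun r : ℝ => r ^ (2*x)) volume 0 1 :=
    intervalIntegral.intervalIntegrable_rpow' h2x1
  have hi2 : IntervalIntegrable (fun r : ℝ => (1 - r) ^ (2*x)) volume 0 1 := by
    have := ((intervalIntegral.intervalIntegrable_rpow' (a := 0) (b := 1) h2x1).comp_sub_left 1).symm
    simpa using this
  have hgi : IntervalIntegrable g volume 0 1 := (hi1.add hi2).div_const 2
  -- pointwise bound
  have key : ∀ r ∈ Set.Ioc (0:ℝ) 1, f r ≤ g r := by
    intro r hr
    have hr0 : 0 < r := hr.1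
    have hr1 : 0 ≤ 1 - r := by linarith [hr.2]
    have ha : 0 ≤ r ^ x := Real.rpow_nonneg hr0.le x
    have hb : 0 ≤ (1 - r) ^ x := Real.rpow_nonneg hr1 x
    have e1 : r ^ (2*x) = (r ^ x) ^ 2 := by
      rw [show (2:ℝ)*x = x*2 by ring, Real.rpow_mul hr0.le]
      norm_num [Real.rpow_natCast]
    have e2 : (1 - r) ^ (2*x) = ((1 - r) ^ x) ^ 2 := by
      rw [show (2:ℝ)*x = x*2 by ring, Real.rpow_mul hr1]
      norm_num [Real.rpow_natCast]
    simp only [hf_def, hg_def, e1, e2]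
    nlinarith [sq_nonneg (r ^ x - (1 - r) ^ x)]
  have hfnonneg : ∀ r ∈ Set.Ioc (0:ℝ) 1, 0 ≤ f r := by
    intro r hr
    exact mul_nonneg (Real.rpow_nonneg hr.1.le x) (Real.rpow_nonneg (by linarith [hr.2]) x)
  have hgnonneg : ∀ r ∈ Set.Ioc (0:ℝ) 1, 0 ≤ g r := fun r hr =>
    le_trans (hfnonneg r hr) (key r hr)
  have hfm : AEStronglyMeasurable f (volume.restrict (Set.uIoc (0:ℝ) 1)) := by
    apply Measurable.aestronglyMeasurable
    fun_prop
  have hfi : IntervalIntegrable f volume 0 1 := by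
    refine hgi.mono_fun hfm ?_
    rw [Set.uIoc_of_le (by norm_num : (0:ℝ) ≤ 1)]
    rw [Filter.EventuallyLE, ae_restrict_iff' measurableSet_Ioc]
    refine Filter.Eventually.of_forall fun r hr => ?_
    rw [Real.norm_eq_abs, Real.norm_eq_abs, abs_of_nonneg (hfnonneg r hr),
      abs_of_nonneg (hgnonneg r hr)]
    exact key r hr
  -- strictness
  have hlt : volume.restrict (Set.Ioc (0:ℝ) 1) {r | f r < g r} ≠ 0 := by
    have hsub : Set.Ioo (0:ℝ) (1/2) ⊆ {r | f r < g r} ∩ Set.Ioc 0 1 := by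
      intro r hr
      have hr0 : 0 < r := hr.1
      have hrhalf : r < 1/2 := hr.2
      have hr1 : 0 < 1 - r := by linarith
      refine ⟨?_, hr0, by linarith⟩
      have ha : 0 ≤ r ^ x := Real.rpow_nonneg hr0.le x
      have hab : r ^ x ≠ (1 - r) ^ x := by
        intro h
        have := congrArg Real.log h
        rw [Real.log_rpow hr0, Real.log_rpow hr1] at this
        have hlog : Real.log r = Real.log (1 - r) := by
          rcases mul_eq_mul_left_iff.mp this with h' | h'
          · exact h'
          · exact absurd h' hx0
        have : r = 1 - r := by
          have := congrArg Real.exp hlog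
          rwa [Real.exp_log hr0, Real.exp_log hr1] at this
        linarith
      have e1 : r ^ (2*x) = (r ^ x) ^ 2 := by
        rw [show (2:ℝ)*x = x*2 by ring, Real.rpow_mul hr0.le]
        norm_num [Real.rpow_natCast]
      have e2 : (1 - r) ^ (2*x) = ((1 - r) ^ x) ^ 2 := by
        rw [show (2:ℝ)*x = x*2 by ring, Real.rpow_mul hr1.le]
        norm_num [Real.rpow_natCast]
      simp only [Set.mem_setOf_eq, hf_def, hg_def, e1, e2]
      have hsq : 0 < (r ^ x - (1 - r) ^ x) ^ 2 :=
        lt_of_le_of_ne (sq_nonneg _) (Ne.symm (pow_ne_zero 2 (sub_ne_zero.2 hab)))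
      nlinarith [hsq]
    intro h0
    rw [Measure.restrict_apply' measurableSet_Ioc] at h0
    have := measure_mono (μ := volume) hsub
    rw [h0] at this
    simp only [le_zero_iff] at this
    rw [Real.volume_Ioo] at this
    norm_num at this
  -- the strict integral inequality
  have hint : (∫ r in (0:ℝ)..1, f r) < ∫ r in (0:ℝ)..1, g r := by
    refine intervalIntegral.integral_lt_integral_of_ae_le_of_measure_setOf_lt_ne_zero
      (by norm_num) hfi hgi ?_ hlt
    rw [Filter.EventuallyLE, ae_restrict_iff' measurableSet_Ioc]
    exact Filter.Eventually.of_forall key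
  -- compute ∫ g
  have I1 : (∫ r in (0:ℝ)..1, r ^ (2*x)) = 1 / (2*x+1) := by
    rw [integral_rpow (Or.inl h2x1)]
    rw [Real.one_rpow, Real.zero_rpow (by linarith)]
    norm_num
  have I2 : (∫ r in (0:ℝ)..1, (1 - r) ^ (2*x)) = 1 / (2*x+1) := by
    have := intervalIntegral.integral_comp_sub_left (a := 0) (b := 1)
      (fun r : ℝ => r ^ (2*x)) 1
    simpa [this] using I1
  have hg_int_val : (∫ r in (0:ℝ)..1, g r) = 1 / (2*x+1) := by
    simp only [hg_def, div_eq_mul_inv]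
    rw [intervalIntegral.integral_mul_const, intervalIntegral.integral_add hi1 hi2, I1, I2]
    have hne' : (2*x+1) ≠ 0 := by linarith
    field_simp
    ring
  -- Beta identities
  have hBeta : Real.Gamma (1+x) * Real.Gamma (1+x)
      = Real.Gamma (2+2*x) * ∫ r in (0:ℝ)..1, f r := by
    have := real_beta h1x h1x
    rw [show (1+x) + (1+x) = 2+2*x by ring] at this
    simpa only [hf_def, show (1+x) - 1 = x by ring] using this
  have hG2 : Real.Gamma (2+2*x) = (1+2*x) * Real.Gamma (1+2*x) := by
    rw [show (2:ℝ)+2*x = (1+2*x) + 1 by ring, Real.Gamma_add_one h12x.ne']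
  have hGpos : 0 < Real.Gamma (2+2*x) := Real.Gamma_pos_of_pos (by linarith)
  calc Real.Gamma (1+x) ^ 2 = Real.Gamma (2+2*x) * ∫ r in (0:ℝ)..1, f r := by
        rw [sq]; exact hBeta
    _ < Real.Gamma (2+2*x) * ∫ r in (0:ℝ)..1, g r := by
        exact mul_lt_mul_of_pos_left hint hGpos
    _ = Real.Gamma (1+2*x) := by
        rw [hg_int_val, hG2]
        have hne' : (2*x+1) ≠ 0 := by linarith
        rw [show (1:ℝ)+2*x = 2*x+1 by ring]
        field_simp

theorem arfima_entropy_rate_strict_max (H : ℝ) (hH : H ∈ Set.Ioo (0:ℝ) 1)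
    (hne : H ≠ 1/2) :
    Real.log (Real.Gamma (3/2 - H)) - (1/2) * Real.log (Real.Gamma (2 - 2 * H))
      < Real.log (Real.Gamma (3/2 - (1/2 : ℝ)))
        - (1/2) * Real.log (Real.Gamma (2 - 2 * (1/2 : ℝ))) := by
  obtain ⟨hH0, hH1⟩ := hH
  set x : ℝ := 1/2 - H with hx_def
  have hx1 : -(1/2) < x := by simp only [hx_def]; linarith
  have hx2 : x < 1/2 := by simp only [hx_def]; linarith
  have hx0 : x ≠ 0 := by
    simp only [hx_def]
    intro h
    apply hne
    linarith
  have key := gamma_sq_lt hx1 hx2 hx0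
  have e1 : 3/2 - H = 1 + x := by simp only [hx_def]; ring
  have e2 : 2 - 2 * H = 1 + 2 * x := by simp only [hx_def]; ring
  have hpos : 0 < Real.Gamma (1 + x) := Real.Gamma_pos_of_pos (by linarith)
  have hlog : Real.log (Real.Gamma (1+x) ^ 2) < Real.log (Real.Gamma (1 + 2*x)) :=
    Real.log_lt_log (by positivity) key
  rw [Real.log_pow] at hlog
  rw [e1, e2]
  norm_num [Real.Gamma_one]
  push_cast at hlog
  linarith
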